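/- Let A and à be square 0-1 matrices (of sizes 81×81 and 9×9 respectively) with Ã_{x,y} = A_{(x,x),(y,y)}, and suppose tr(Aᵏ) = tr(Ãᵏ) for all k ≥ 1. Then every closed walk (x₁,y₁) → (x₂,y₂) → ⋯ → (x_k,y_k) → (x₁,y₁) in the digraph of A has x_j = y_j for all j. -/
import Mathlib

/-- If a 0-1 matrix A on pairs and its diagonal restriction Ã have equal traces of
all powers, every closed walk in the digraph of A stays on diagonal pairs. -/
theorem stmt13 (A : Matrix (Fin 9 × Fin 9) (Fin 9 × Fin 9) ℝ)
    (hA01 : ∀ i j, A i j = 0 ∨ A i j = 1)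
    (Atil : Matrix (Fin 9) (Fin 9) ℝ)
    (hAtil : ∀ x y, Atil x y = A (x, x) (y, y))
    (htr : ∀ k : ℕ, 1 ≤ k → (A ^ k).trace = (Atil ^ k).trace)
    (k : ℕ) (hk : 0 < k) (w : ZMod k → Fin 9 × Fin 9)
    (hw : ∀ j : ZMod k, A (w j) (w (j + 1)) = 1) :
    ∀ j : ZMod k, (w j).1 = (w j).2 := by
  have hA0 : ∀ i j, (0:ℝ) ≤ A i j := fun i j => by
    rcases hA01 i j with h | h <;> simp [h]
  set D : Matrix (Fin 9 × Fin 9) (Fin 9 × Fin 9) ℝ :=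
    fun p q => if p.1 = p.2 ∧ q.1 = q.2 then A p q else 0 with hDdef
  have hD0 : ∀ p q, (0:ℝ) ≤ D p q := by
    intro p q; simp only [hDdef]; split
    · exact hA0 p q
    · exact le_refl 0
  have hDA : ∀ p q, D p q ≤ A p q := by
    intro p q; simp only [hDdef]; split
    · exact le_refl _
    · exact hA0 p q
  -- entrywise bounds for powers
  have hpow : ∀ n : ℕ, (∀ p q, (0:ℝ) ≤ (D ^ n) p q) ∧
      (∀ p q, (0:ℝ) ≤ (A ^ n) p q) ∧ (∀ p q, (D ^ n) p q ≤ (A ^ n) p q) := by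
    intro n
    induction n with
    | zero =>
      refine ⟨?_, ?_, ?_⟩ <;> intro p q <;> simp [Matrix.one_apply] <;>
        split <;> norm_num
    | succ n ih =>
      obtain ⟨ihD, ihA, ihle⟩ := ih
      refine ⟨?_, ?_, ?_⟩ <;> intro p q <;>
        simp only [pow_succ, Matrix.mul_apply]
      · exact Finset.sum_nonneg fun r _ => mul_nonneg (ihD p r) (hD0 r q)
      · exact Finset.sum_nonneg fun r _ => mul_nonneg (ihA p r) (hA0 r q)
      · exact Finset.sum_le_sum fun r _ =>
          mul_le_mul (ihle p r) (hDA r q) (hD0 r q) (ihA p r)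
  -- D^n kills off-diagonal rows
  have hDoff : ∀ n : ℕ, 0 < n → ∀ p q : Fin 9 × Fin 9, p.1 ≠ p.2 → (D ^ n) p q = 0 := by
    intro n hn p q hp
    obtain ⟨m, rfl⟩ := Nat.exists_eq_succ_of_ne_zero hn.ne'
    rw [pow_succ', Matrix.mul_apply]
    refine Finset.sum_eq_zero fun r _ => ?_
    have : D p r = 0 := by simp [hDdef, hp]
    rw [this, zero_mul]
  -- D^n on diagonal pairs equals Atil^n
  have hDn : ∀ n : ℕ, ∀ x y : Fin 9, (D ^ n) (x, x) (y, y) = (Atil ^ n) x y := by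
    intro n
    induction n with
    | zero =>
      intro x y
      simp [Matrix.one_apply, Prod.ext_iff]
    | succ n ih =>
      intro x y
      rw [pow_succ', pow_succ', Matrix.mul_apply, Matrix.mul_apply,
        Fintype.sum_prod_type]
      refine Finset.sum_congr rfl fun a _ => ?_
      rw [Finset.sum_eq_single a]
      · have hD : D (x, x) (a, a) = A (x, x) (a, a) := if_pos ⟨rfl, rfl⟩
        rw [hD, ih a y, hAtil]
      · intro b _ hb
        have hD : D (x, x) (a, b) = 0 := if_neg fun h => hb h.2.symm
        rw [hD, zero_mul]
      · intro h; exact absurd (Finset.mem_univ a) h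
  -- trace of D^k equals trace of Atil^k
  have htrD : (D ^ k).trace = (Atil ^ k).trace := by
    simp only [Matrix.trace, Matrix.diag]
    rw [Fintype.sum_prod_type]
    refine Finset.sum_congr rfl fun a _ => ?_
    rw [Finset.sum_eq_single a]
    · exact hDn k a a
    · intro b _ hb
      exact hDoff k hk (a, b) (a, b) (fun h => hb h.symm)
    · intro h; exact absurd (Finset.mem_univ a) h
  -- hence diagonal entries of A^k and D^k agree
  have hdiag : ∀ p, (A ^ k) p p = (D ^ k) p p := by
    have hle : ∀ p ∈ Finset.univ, (D ^ k) p p ≤ (A ^ k) p p :=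
      fun p _ => (hpow k).2.2 p p
    have hsum : ∑ p, (D ^ k) p p = ∑ p, (A ^ k) p p := by
      have h1 := htr k hk
      have h2 := htrD
      simp only [Matrix.trace, Matrix.diag] at h1 h2
      linarith
    intro p
    exact ((Finset.sum_eq_sum_iff_of_le hle).mp hsum p (Finset.mem_univ p)).symm
  -- closed walks in A give diagonal entries ≥ 1
  have hwalk : ∀ n : ℕ, ∀ j : ZMod k, (1:ℝ) ≤ (A ^ n) (w j) (w (j + (n : ZMod k))) := by
    intro n
    induction n with
    | zero => intro j; simp [Matrix.one_apply]
    | succ n ih =>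
      intro j
      rw [pow_succ', Matrix.mul_apply]
      have hstep : (1:ℝ) ≤ A (w j) (w (j + 1)) * (A ^ n) (w (j + 1)) (w (j + ((n:ℕ)+1 : ℕ))) := by
        have h1 : (j : ZMod k) + (((n:ℕ)+1 : ℕ) : ZMod k) = (j + 1) + (n : ZMod k) := by
          push_cast; ring
        rw [h1, hw j, one_mul]
        exact ih (j + 1)
      calc (1:ℝ) ≤ A (w j) (w (j + 1)) * (A ^ n) (w (j + 1)) (w (j + ((n:ℕ)+1 : ℕ))) := hstep
        _ ≤ ∑ r, A (w j) r * (A ^ n) r (w (j + ((n:ℕ)+1 : ℕ))) := by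
            refine Finset.single_le_sum (f := fun r => A (w j) r * (A ^ n) r (w (j + ((n:ℕ)+1 : ℕ)))) ?_ (Finset.mem_univ _)
            intro r _
            exact mul_nonneg (hA0 _ _) ((hpow n).2.1 _ _)
  -- conclude
  intro j
  by_contra hne
  have h1 : (1:ℝ) ≤ (A ^ k) (w j) (w j) := by
    have := hwalk k j
    rwa [ZMod.natCast_self, add_zero] at this
  have h2 : (D ^ k) (w j) (w j) = 0 := hDoff k hk (w j) (w j) hne
  rw [hdiag (w j), h2] at h1
  linarith
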